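/- Let H be a C² gauge on ℝ^N \ {0} whose sublevel set B^H_1(0) is uniformly convex, with associated constant λ > 0 such that ∂²_{ij}(H^N)(ξ)η_iη_j ≥ (1/λ)|ξ|^{N−2}|η|² and Σ_{i,j}|∂²_{ij}(H^N)(ξ)| ≤ λ|ξ|^{N−2} for all ξ ≠ 0, η ∈ ℝ^N. Then there exist constants c₁, c₂ > 0, depending only on N and λ, such that for all ξ₁, ξ₂ ∈ ℝ^N \ {0}: ⟨a(ξ₁) − a(ξ₂), ξ₁ − ξ₂⟩ ≥ c₁(|ξ₁| + |ξ₂|)^{N−2}|ξ₁ − ξ₂|² and |a(ξ₁) − a(ξ₂)| ≤ c₂(|ξ₁| + |ξ₂|)^{N−2}|ξ₁ − ξ₂|, where a(ξ) := H^{N−1}(ξ)∇H(ξ) = (1/N)∇(H^N)(ξ). -/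

import Mathlib

open Metric Set

noncomputable section
variable {N : ℕ}
local notation "E" => EuclideanSpace ℝ (Fin N)

-- fderiv of H^N at ξ ≠ 0
lemma aux_hasFDeriv (H : E → ℝ) (hC2 : ContDiffOn ℝ 2 H ({0}ᶜ : Set E))
    {ξ : E} (hξ : ξ ≠ 0) :
    HasFDerivAt (fun x => H x ^ N) (((N : ℝ) * H ξ ^ (N - 1)) • fderiv ℝ H ξ) ξ := by
  have hdiff : DifferentiableAt ℝ H ξ := by
    have := (hC2.contDiffAt (isOpen_compl_singleton.mem_nhds hξ))
    exact this.differentiableAt (by norm_num)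
  have h1 : HasDerivAt (fun y : ℝ => y ^ N) ((N : ℝ) * H ξ ^ (N - 1)) (H ξ) :=
    hasDerivAt_pow N (H ξ)
  exact h1.comp_hasFDerivAt ξ hdiff.hasFDerivAt

lemma aux_inner_a (H : E → ℝ) (hC2 : ContDiffOn ℝ 2 H ({0}ᶜ : Set E))
    (a : E → E) (ha : ∀ ξ, a ξ = (H ξ) ^ (N - 1) • gradient H ξ)
    {ξ : E} (hξ : ξ ≠ 0) (w : E) :
    (N : ℝ) * (inner ℝ (a ξ) w : ℝ) = fderiv ℝ (fun x => H x ^ N) ξ w := by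
  rw [(aux_hasFDeriv H hC2 hξ).fderiv]
  rw [ha, inner_smul_left]
  have : (inner ℝ (gradient H ξ) w : ℝ) = fderiv ℝ H ξ w := by
    rw [gradient, InnerProductSpace.toDual_symm_apply]
  simp [this]
  ring

lemma aux_ftc (f : E → ℝ) (hC2f : ContDiffOn ℝ 2 f ({0}ᶜ : Set E))
    {ξ₁ ξ₂ : E} (hseg : ∀ t ∈ Icc (0:ℝ) 1, ξ₂ + t • (ξ₁ - ξ₂) ≠ 0) (w : E) :
    fderiv ℝ f ξ₁ w - fderiv ℝ f ξ₂ w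
      = ∫ t in (0:ℝ)..1,
          fderiv ℝ (fderiv ℝ f) (ξ₂ + t • (ξ₁ - ξ₂)) (ξ₁ - ξ₂) w := by
  set η := ξ₁ - ξ₂ with hη
  set γ : ℝ → E := fun t => ξ₂ + t • η with hγ
  have hB : ContinuousOn (fderiv ℝ (fderiv ℝ f)) ({0}ᶜ : Set E) := by
    have h1 : ContDiffOn ℝ 1 (fderiv ℝ f) ({0}ᶜ : Set E) :=
      hC2f.fderiv_of_isOpen isOpen_compl_singleton (by norm_num)
    exact h1.continuousOn_fderiv_of_isOpen isOpen_compl_singleton le_rfl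
  have hγc : Continuous γ := by fun_prop
  have hderiv : ∀ t ∈ uIcc (0:ℝ) 1,
      HasDerivAt (fun t => fderiv ℝ f (γ t) w)
        (fderiv ℝ (fderiv ℝ f) (γ t) η w) t := by
    intro t ht
    rw [uIcc_of_le (by norm_num : (0:ℝ) ≤ 1)] at ht
    have hne : γ t ≠ 0 := hseg t ht
    have hcd : ContDiffAt ℝ 2 f (γ t) :=
      hC2f.contDiffAt (isOpen_compl_singleton.mem_nhds hne)
    have hd2 : DifferentiableAt ℝ (fderiv ℝ f) (γ t) :=
      (hcd.fderiv_right (m := 1) (by norm_num)).differentiableAt (by norm_num)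
    have hγd : HasDerivAt γ η t := by
      simpa [hγ] using ((hasDerivAt_id t).smul_const η).const_add ξ₂
    have hg : HasFDerivAt (fun x => fderiv ℝ f x w)
        ((fderiv ℝ (fderiv ℝ f) (γ t)).flip w) (γ t) := by
      have := hd2.hasFDerivAt.clm_apply (hasFDerivAt_const w (γ t))
      simpa using this
    have := hg.comp_hasDerivAt t hγd
    exact this
  have hint : IntervalIntegrable
      (fun t => fderiv ℝ (fderiv ℝ f) (γ t) η w) MeasureTheory.volume 0 1 := by
    apply ContinuousOn.intervalIntegrable
    rw [uIcc_of_le (by norm_num : (0:ℝ) ≤ 1)]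
    have hmaps : MapsTo γ (Icc 0 1) ({0}ᶜ : Set E) := fun t ht => hseg t ht
    have h1 : ContinuousOn (fun t => fderiv ℝ (fderiv ℝ f) (γ t)) (Icc 0 1) :=
      hB.comp hγc.continuousOn hmaps
    exact (h1.clm_apply continuousOn_const).clm_apply continuousOn_const
  have := intervalIntegral.integral_eq_sub_of_hasDerivAt hderiv hint
  rw [this]
  have h1 : γ 1 = ξ₁ := by simp [hγ, hη]
  have h0 : γ 0 = ξ₂ := by simp [hγ]
  rw [h1, h0]

lemma aux_decomp (η : E) :
    η = ∑ j : Fin N, η j • EuclideanSpace.single j (1:ℝ) := by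
  have := (EuclideanSpace.basisFun (Fin N) ℝ).sum_repr' η
  simp only [EuclideanSpace.basisFun_apply, EuclideanSpace.inner_single_left, map_one,
    one_mul] at this
  exact this.symm

lemma aux_coord_le (η : E) (j : Fin N) : |η j| ≤ ‖η‖ := by
  have := abs_real_inner_le_norm η (EuclideanSpace.single j (1:ℝ))
  simpa [EuclideanSpace.inner_single_right] using this

lemma aux_norm_le_sum (Δ : E) : ‖Δ‖ ≤ ∑ i : Fin N, |Δ i| := by
  calc ‖Δ‖ = ‖∑ i : Fin N, Δ i • EuclideanSpace.single i (1:ℝ)‖ := by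
        rw [← aux_decomp]
    _ ≤ ∑ i : Fin N, ‖Δ i • EuclideanSpace.single i (1:ℝ)‖ := norm_sum_le _ _
    _ = ∑ i : Fin N, |Δ i| := by simp [norm_smul]

lemma aux_seg_rw (ξ₁ ξ₂ : E) (t : ℝ) :
    ξ₂ + t • (ξ₁ - ξ₂) = t • ξ₁ + (1-t) • ξ₂ := by module

lemma aux_seg_ub (ξ₁ ξ₂ : E) {t : ℝ} (ht : t ∈ Icc (0:ℝ) 1) :
    ‖ξ₂ + t • (ξ₁ - ξ₂)‖ ≤ ‖ξ₁‖ + ‖ξ₂‖ := by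
  rw [aux_seg_rw]
  calc ‖t • ξ₁ + (1-t) • ξ₂‖ ≤ ‖t • ξ₁‖ + ‖(1-t) • ξ₂‖ := norm_add_le _ _
    _ = |t| * ‖ξ₁‖ + |1-t| * ‖ξ₂‖ := by rw [norm_smul, norm_smul]; simp
    _ ≤ ‖ξ₁‖ + ‖ξ₂‖ := by
        obtain ⟨h0, h1⟩ := ht
        rw [abs_of_nonneg h0, abs_of_nonneg (by linarith)]
        have := norm_nonneg ξ₁; have := norm_nonneg ξ₂
        nlinarith

lemma aux_seg_lb {ξ₁ ξ₂ : E} (hnorm : ‖ξ₂‖ ≤ ‖ξ₁‖) {t : ℝ}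
    (ht : t ∈ Icc (3/4 : ℝ) 1) :
    (‖ξ₁‖ + ‖ξ₂‖)/4 ≤ ‖ξ₂ + t • (ξ₁ - ξ₂)‖ := by
  rw [aux_seg_rw]
  obtain ⟨h0, h1⟩ := ht
  have key : ‖t • ξ₁‖ - ‖-((1-t) • ξ₂)‖ ≤ ‖t • ξ₁ - -((1-t) • ξ₂)‖ :=
    norm_sub_norm_le _ _
  simp only [norm_neg, sub_neg_eq_add] at key
  rw [norm_smul, norm_smul] at key
  simp only [Real.norm_eq_abs] at key
  rw [abs_of_nonneg (by linarith : (0:ℝ) ≤ t),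
    abs_of_nonneg (by linarith : (0:ℝ) ≤ 1 - t)] at key
  have h2 := norm_nonneg ξ₂
  nlinarith

lemma aux_int_lb {ξ₁ ξ₂ : E} (hnorm : ‖ξ₂‖ ≤ ‖ξ₁‖) (k : ℕ) :
    (1/4) * (((‖ξ₁‖ + ‖ξ₂‖)/4)^k)
      ≤ ∫ t in (0:ℝ)..1, ‖ξ₂ + t • (ξ₁ - ξ₂)‖ ^ k := by
  have hcont : Continuous fun t : ℝ => ‖ξ₂ + t • (ξ₁ - ξ₂)‖ ^ k := by fun_prop
  have hi1 : IntervalIntegrable (fun t : ℝ => ‖ξ₂ + t • (ξ₁ - ξ₂)‖ ^ k)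
      MeasureTheory.volume 0 (3/4) := hcont.intervalIntegrable _ _
  have hi2 : IntervalIntegrable (fun t : ℝ => ‖ξ₂ + t • (ξ₁ - ξ₂)‖ ^ k)
      MeasureTheory.volume (3/4) 1 := hcont.intervalIntegrable _ _
  have hsplit := intervalIntegral.integral_add_adjacent_intervals hi1 hi2
  have hnn : (0:ℝ) ≤ ∫ t in (0:ℝ)..(3/4), ‖ξ₂ + t • (ξ₁ - ξ₂)‖ ^ k :=
    intervalIntegral.integral_nonneg (by norm_num) (fun t _ => by positivity)
  have hmono : (∫ t in (3/4 : ℝ)..1, (((‖ξ₁‖ + ‖ξ₂‖)/4)^k))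
      ≤ ∫ t in (3/4 : ℝ)..1, ‖ξ₂ + t • (ξ₁ - ξ₂)‖ ^ k := by
    apply intervalIntegral.integral_mono_on (by norm_num)
      (intervalIntegrable_const) (hcont.intervalIntegrable _ _)
    intro t ht
    exact pow_le_pow_left₀ (by positivity) (aux_seg_lb hnorm ht) k
  rw [intervalIntegral.integral_const] at hmono
  simp only [smul_eq_mul] at hmono
  have : ((1:ℝ) - 3/4) = 1/4 := by norm_num
  rw [this] at hmono
  linarith

lemma aux_Bcont (f : E → ℝ) (hC2f : ContDiffOn ℝ 2 f ({0}ᶜ : Set E))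
    {ξ₁ ξ₂ : E} (hseg : ∀ t ∈ Icc (0:ℝ) 1, ξ₂ + t • (ξ₁ - ξ₂) ≠ 0) :
    ContinuousOn (fun t => fderiv ℝ (fderiv ℝ f) (ξ₂ + t • (ξ₁ - ξ₂)))
      (Icc (0:ℝ) 1) := by
  have hB : ContinuousOn (fderiv ℝ (fderiv ℝ f)) ({0}ᶜ : Set E) := by
    have h1 : ContDiffOn ℝ 1 (fderiv ℝ f) ({0}ᶜ : Set E) :=
      hC2f.fderiv_of_isOpen isOpen_compl_singleton (by norm_num)
    exact h1.continuousOn_fderiv_of_isOpen isOpen_compl_singleton le_rfl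
  exact hB.comp (by fun_prop) (fun t ht => hseg t ht)

lemma aux_bilinear_bound (L : E →L[ℝ] E →L[ℝ] ℝ) (η w : E) :
    |L η w| ≤ ‖η‖ * ∑ j : Fin N, |L (EuclideanSpace.single j (1:ℝ)) w| := by
  conv_lhs => rw [aux_decomp η]
  rw [map_sum, ContinuousLinearMap.sum_apply]
  simp only [map_smul, ContinuousLinearMap.smul_apply, smul_eq_mul]
  calc |∑ j : Fin N, η j * L (EuclideanSpace.single j (1:ℝ)) w|
      ≤ ∑ j : Fin N, |η j * L (EuclideanSpace.single j (1:ℝ)) w| :=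
        Finset.abs_sum_le_sum_abs _ _
    _ ≤ ∑ j : Fin N, ‖η‖ * |L (EuclideanSpace.single j (1:ℝ)) w| := by
        apply Finset.sum_le_sum
        intro j _
        rw [abs_mul]
        exact mul_le_mul_of_nonneg_right (aux_coord_le η j) (abs_nonneg _)
    _ = ‖η‖ * ∑ j : Fin N, |L (EuclideanSpace.single j (1:ℝ)) w| := by
        rw [Finset.mul_sum]

lemma aux_core (hN : 2 ≤ N) (H : E → ℝ)
    (hC2 : ContDiffOn ℝ 2 H ({0}ᶜ : Set E))
    (lam : ℝ) (hlam : 0 < lam)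
    (hhess_lb : ∀ ξ : E, ξ ≠ 0 → ∀ η,
      (1 / lam) * ‖ξ‖ ^ (N - 2) * ‖η‖ ^ 2 ≤
        (iteratedFDeriv ℝ 2 (fun x => (H x) ^ N) ξ) ![η, η])
    (hhess_ub : ∀ ξ : E, ξ ≠ 0 →
      ∑ i : Fin N, ∑ j : Fin N,
        |(iteratedFDeriv ℝ 2 (fun x => (H x) ^ N) ξ)
          ![EuclideanSpace.single i (1:ℝ), EuclideanSpace.single j (1:ℝ)]| ≤
        lam * ‖ξ‖ ^ (N - 2))
    (a : E → E) (ha : ∀ ξ, a ξ = (H ξ) ^ (N - 1) • gradient H ξ)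
    (ξ₁ ξ₂ : E) (hseg : ∀ t ∈ Icc (0:ℝ) 1, ξ₂ + t • (ξ₁ - ξ₂) ≠ 0)
    (hnorm : ‖ξ₂‖ ≤ ‖ξ₁‖) :
    (1/((N:ℝ)*lam*4^(N-1))) * (‖ξ₁‖ + ‖ξ₂‖) ^ (N - 2) * ‖ξ₁ - ξ₂‖ ^ 2 ≤
        (inner ℝ (a ξ₁ - a ξ₂) (ξ₁ - ξ₂) : ℝ) ∧
      ‖a ξ₁ - a ξ₂‖ ≤ lam * (‖ξ₁‖ + ‖ξ₂‖) ^ (N - 2) * ‖ξ₁ - ξ₂‖ := by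
  have hNpos : (0:ℝ) < N := by
    have : (0:ℕ) < N := by omega
    exact_mod_cast this
  have hξ₁ : ξ₁ ≠ 0 := by
    have := hseg 1 (by norm_num)
    simpa using this
  have hξ₂ : ξ₂ ≠ 0 := by
    have := hseg 0 (by norm_num)
    simpa using this
  set f : E → ℝ := fun x => H x ^ N with hf
  have hC2f : ContDiffOn ℝ 2 f ({0}ᶜ : Set E) := hC2.pow N
  set η : E := ξ₁ - ξ₂ with hηdef
  set S : ℝ := ‖ξ₁‖ + ‖ξ₂‖ with hSdef
  have hS0 : 0 ≤ S := by positivity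
  set B : E → E →L[ℝ] E →L[ℝ] ℝ := fun x => fderiv ℝ (fderiv ℝ f) x with hBdef
  -- rephrased Hessian bounds
  have hlb' : ∀ x : E, x ≠ 0 → ∀ v : E,
      (1/lam) * ‖x‖^(N-2) * ‖v‖^2 ≤ B x v v := by
    intro x hx v
    have := hhess_lb x hx v
    rwa [iteratedFDeriv_two_apply, Matrix.cons_val_zero, Matrix.cons_val_one,
      Matrix.cons_val_zero] at this
  have hub' : ∀ x : E, x ≠ 0 →
      ∑ i : Fin N, ∑ j : Fin N,
        |B x (EuclideanSpace.single i (1:ℝ)) (EuclideanSpace.single j (1:ℝ))|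
        ≤ lam * ‖x‖^(N-2) := by
    intro x hx
    have := hhess_ub x hx
    simp only [iteratedFDeriv_two_apply, Matrix.cons_val_zero, Matrix.cons_val_one,
      Matrix.head_cons] at this
    exact this
  -- key identity
  have key : ∀ w : E, (N:ℝ) * (inner ℝ (a ξ₁ - a ξ₂) w : ℝ)
      = ∫ t in (0:ℝ)..1, B (ξ₂ + t • η) η w := by
    intro w
    rw [inner_sub_left, mul_sub, aux_inner_a H hC2 a ha hξ₁ w,
      aux_inner_a H hC2 a ha hξ₂ w]
    exact aux_ftc f hC2f hseg w
  have hIcc : uIcc (0:ℝ) 1 = Icc 0 1 := uIcc_of_le (by norm_num)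
  have hBc : ContinuousOn (fun t => B (ξ₂ + t • η)) (Icc (0:ℝ) 1) :=
    aux_Bcont f hC2f hseg
  have hBint : ∀ v w : E, IntervalIntegrable (fun t => B (ξ₂ + t • η) v w)
      MeasureTheory.volume 0 1 := by
    intro v w
    apply ContinuousOn.intervalIntegrable
    rw [hIcc]
    exact (hBc.clm_apply continuousOn_const).clm_apply continuousOn_const
  constructor
  · -- monotonicity
    have hcont : Continuous fun t : ℝ => ‖ξ₂ + t • η‖ ^ (N-2) := by fun_prop
    have heq : (fun t : ℝ => ((1/lam) * ‖η‖^2) * ‖ξ₂ + t • η‖^(N-2))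
        = fun t : ℝ => (1/lam) * ‖ξ₂ + t • η‖^(N-2) * ‖η‖^2 := by
      funext t; ring
    have hmono : (∫ t in (0:ℝ)..1, (1/lam) * ‖ξ₂ + t • η‖^(N-2) * ‖η‖^2)
        ≤ ∫ t in (0:ℝ)..1, B (ξ₂ + t • η) η η := by
      apply intervalIntegral.integral_mono_on (by norm_num)
      · rw [← heq]
        exact (Continuous.intervalIntegrable (by fun_prop) _ _)
      · exact hBint η η
      · intro t ht
        exact hlb' _ (hseg t ht) η
    have hconst : (1/lam) * ‖η‖^2 * ((1/4) * ((S/4)^(N-2)))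
        ≤ ∫ t in (0:ℝ)..1, (1/lam) * ‖ξ₂ + t • η‖^(N-2) * ‖η‖^2 := by
      rw [← heq, intervalIntegral.integral_const_mul]
      apply mul_le_mul_of_nonneg_left _ (by positivity)
      exact aux_int_lb hnorm (N-2)
    have low : (1/lam) * ‖η‖^2 * ((1/4) * ((S/4)^(N-2)))
        ≤ (N:ℝ) * (inner ℝ (a ξ₁ - a ξ₂) η : ℝ) := by
      rw [key η]; linarith
    have hclaim : (N:ℝ) * ((1/((N:ℝ)*lam*4^(N-1))) * S^(N-2) * ‖η‖^2)
        = (1/lam) * ‖η‖^2 * ((1/4) * ((S/4)^(N-2))) := by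
      have h4 : (4:ℝ)^(N-1) = 4^(N-2) * 4 := by
        rw [← pow_succ]
        congr 1
        omega
      rw [div_pow, h4]
      have h4pos : (0:ℝ) < 4^(N-2) := by positivity
      field_simp
    have := low
    rw [← hclaim] at this
    exact le_of_mul_le_mul_left this hNpos
  · -- Lipschitz bound
    set Δ : E := a ξ₁ - a ξ₂ with hΔdef
    have coordkey : ∀ i : Fin N, (N:ℝ) * Δ i
        = ∫ t in (0:ℝ)..1, B (ξ₂ + t • η) η (EuclideanSpace.single i (1:ℝ)) := by
      intro i
      have := key (EuclideanSpace.single i (1:ℝ))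
      rwa [EuclideanSpace.inner_single_right, RCLike.conj_to_real, one_mul] at this
    have hint_h : ∀ i : Fin N, IntervalIntegrable
        (fun t => ‖η‖ * ∑ j : Fin N,
          |B (ξ₂ + t • η) (EuclideanSpace.single j (1:ℝ)) (EuclideanSpace.single i (1:ℝ))|)
        MeasureTheory.volume 0 1 := by
      intro i
      apply ContinuousOn.intervalIntegrable
      rw [hIcc]
      apply ContinuousOn.mul continuousOn_const
      apply continuousOn_finset_sum
      intro j _
      exact ((hBc.clm_apply continuousOn_const).clm_apply continuousOn_const).abs
    have percoord : ∀ i : Fin N, (N:ℝ) * |Δ i|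
        ≤ ∫ t in (0:ℝ)..1, ‖η‖ * ∑ j : Fin N,
            |B (ξ₂ + t • η) (EuclideanSpace.single j (1:ℝ))
              (EuclideanSpace.single i (1:ℝ))| := by
      intro i
      have h1 : (N:ℝ) * |Δ i| = |(N:ℝ) * Δ i| := by
        rw [abs_mul, abs_of_nonneg hNpos.le]
      rw [h1, coordkey i]
      calc |∫ t in (0:ℝ)..1, B (ξ₂ + t • η) η (EuclideanSpace.single i (1:ℝ))|
          ≤ ∫ t in (0:ℝ)..1, |B (ξ₂ + t • η) η (EuclideanSpace.single i (1:ℝ))| :=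
            intervalIntegral.abs_integral_le_integral_abs (by norm_num)
        _ ≤ _ := by
            apply intervalIntegral.integral_mono_on (by norm_num)
              ((hBint η _).abs) (hint_h i)
            intro t ht
            exact aux_bilinear_bound _ η _
    have sum_bound : (N:ℝ) * ∑ i : Fin N, |Δ i| ≤ ‖η‖ * (lam * S^(N-2)) := by
      rw [Finset.mul_sum]
      calc ∑ i : Fin N, (N:ℝ) * |Δ i|
          ≤ ∑ i : Fin N, ∫ t in (0:ℝ)..1, ‖η‖ * ∑ j : Fin N,
              |B (ξ₂ + t • η) (EuclideanSpace.single j (1:ℝ))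
                (EuclideanSpace.single i (1:ℝ))| :=
            Finset.sum_le_sum fun i _ => percoord i
        _ = ∫ t in (0:ℝ)..1, ∑ i : Fin N, ‖η‖ * ∑ j : Fin N,
              |B (ξ₂ + t • η) (EuclideanSpace.single j (1:ℝ))
                (EuclideanSpace.single i (1:ℝ))| :=
            (intervalIntegral.integral_finset_sum (fun i _ => hint_h i)).symm
        _ ≤ ∫ t in (0:ℝ)..1, ‖η‖ * (lam * S^(N-2)) := by
            apply intervalIntegral.integral_mono_on (by norm_num)
            · apply ContinuousOn.intervalIntegrable
              rw [hIcc]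
              apply continuousOn_finset_sum
              intro i _
              apply ContinuousOn.mul continuousOn_const
              apply continuousOn_finset_sum
              intro j _
              exact ((hBc.clm_apply continuousOn_const).clm_apply continuousOn_const).abs
            · exact intervalIntegrable_const
            · intro t ht
              rw [← Finset.mul_sum]
              apply mul_le_mul_of_nonneg_left _ (norm_nonneg η)
              rw [Finset.sum_comm]
              calc ∑ j : Fin N, ∑ i : Fin N,
                    |B (ξ₂ + t • η) (EuclideanSpace.single j (1:ℝ))
                      (EuclideanSpace.single i (1:ℝ))|
                  ≤ lam * ‖ξ₂ + t • η‖^(N-2) := hub' _ (hseg t ht)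
                _ ≤ lam * S^(N-2) := by
                    apply mul_le_mul_of_nonneg_left _ hlam.le
                    exact pow_le_pow_left₀ (norm_nonneg _) (aux_seg_ub ξ₁ ξ₂ ht) _
        _ = ‖η‖ * (lam * S^(N-2)) := by
            rw [intervalIntegral.integral_const]
            norm_num
    have hΔnorm : ‖Δ‖ ≤ ∑ i : Fin N, |Δ i| := aux_norm_le_sum Δ
    have hfin : (N:ℝ) * ‖Δ‖ ≤ ‖η‖ * (lam * S^(N-2)) := by
      calc (N:ℝ) * ‖Δ‖ ≤ (N:ℝ) * ∑ i : Fin N, |Δ i| :=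
            mul_le_mul_of_nonneg_left hΔnorm hNpos.le
        _ ≤ _ := sum_bound
    have hN1 : (1:ℝ) ≤ (N:ℝ) := by exact_mod_cast (by omega : 1 ≤ N)
    have h2 : ‖Δ‖ ≤ (N:ℝ) * ‖Δ‖ := le_mul_of_one_le_left (norm_nonneg Δ) hN1
    have heq : ‖η‖ * (lam * S^(N-2)) = lam * S^(N-2) * ‖η‖ := by ring
    linarith

lemma aux_nondeg (hN : 2 ≤ N) (H : E → ℝ)
    (hC2 : ContDiffOn ℝ 2 H ({0}ᶜ : Set E))
    (lam : ℝ) (hlam : 0 < lam)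
    (hhess_lb : ∀ ξ : E, ξ ≠ 0 → ∀ η,
      (1 / lam) * ‖ξ‖ ^ (N - 2) * ‖η‖ ^ 2 ≤
        (iteratedFDeriv ℝ 2 (fun x => (H x) ^ N) ξ) ![η, η])
    (hhess_ub : ∀ ξ : E, ξ ≠ 0 →
      ∑ i : Fin N, ∑ j : Fin N,
        |(iteratedFDeriv ℝ 2 (fun x => (H x) ^ N) ξ)
          ![EuclideanSpace.single i (1:ℝ), EuclideanSpace.single j (1:ℝ)]| ≤
        lam * ‖ξ‖ ^ (N - 2))
    (a : E → E) (ha : ∀ ξ, a ξ = (H ξ) ^ (N - 1) • gradient H ξ)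
    (ξ₁ ξ₂ : E) (hseg : ∀ t ∈ Icc (0:ℝ) 1, ξ₂ + t • (ξ₁ - ξ₂) ≠ 0) :
    (1/((N:ℝ)*lam*4^(N-1))) * (‖ξ₁‖ + ‖ξ₂‖) ^ (N - 2) * ‖ξ₁ - ξ₂‖ ^ 2 ≤
        (inner ℝ (a ξ₁ - a ξ₂) (ξ₁ - ξ₂) : ℝ) ∧
      ‖a ξ₁ - a ξ₂‖ ≤ lam * (‖ξ₁‖ + ‖ξ₂‖) ^ (N - 2) * ‖ξ₁ - ξ₂‖ := by
  rcases le_total ‖ξ₂‖ ‖ξ₁‖ with hnorm | hnorm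
  · exact aux_core hN H hC2 lam hlam hhess_lb hhess_ub a ha ξ₁ ξ₂ hseg hnorm
  · have hseg' : ∀ t ∈ Icc (0:ℝ) 1, ξ₁ + t • (ξ₂ - ξ₁) ≠ 0 := by
      intro t ht
      have h := hseg (1-t) ⟨by linarith [ht.2], by linarith [ht.1]⟩
      have : ξ₂ + (1-t) • (ξ₁ - ξ₂) = ξ₁ + t • (ξ₂ - ξ₁) := by module
      rwa [this] at h
    obtain ⟨h1, h2⟩ := aux_core hN H hC2 lam hlam hhess_lb hhess_ub a ha ξ₂ ξ₁
      hseg' hnorm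
    have e1 : (inner ℝ (a ξ₂ - a ξ₁) (ξ₂ - ξ₁) : ℝ)
        = (inner ℝ (a ξ₁ - a ξ₂) (ξ₁ - ξ₂) : ℝ) := by
      rw [← neg_sub (a ξ₁) (a ξ₂), ← neg_sub ξ₁ ξ₂, inner_neg_neg]
    have e2 : ‖ξ₂ - ξ₁‖ = ‖ξ₁ - ξ₂‖ := norm_sub_rev _ _
    have e3 : ‖a ξ₂ - a ξ₁‖ = ‖a ξ₁ - a ξ₂‖ := norm_sub_rev _ _
    have e4 : ‖ξ₂‖ + ‖ξ₁‖ = ‖ξ₁‖ + ‖ξ₂‖ := add_comm _ _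
    rw [e1, e2, e4] at h1
    rw [e2, e3, e4] at h2
    exact ⟨h1, h2⟩

lemma aux_perp (hN : 2 ≤ N) (ξ : E) (hξ : ξ ≠ 0) :
    ∃ v : E, ‖v‖ = 1 ∧ (inner ℝ ξ v : ℝ) = 0 := by
  have hKne : ((ℝ ∙ ξ)ᗮ : Submodule ℝ E) ≠ ⊥ := by
    intro h
    rw [Submodule.orthogonal_eq_bot_iff] at h
    have h1 : Module.finrank ℝ (ℝ ∙ ξ) = 1 := finrank_span_singleton hξ
    rw [h] at h1
    rw [finrank_top] at h1
    rw [finrank_euclideanSpace_fin] at h1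
    omega
  obtain ⟨v₀, hv₀K, hv₀⟩ := Submodule.exists_mem_ne_zero_of_ne_bot hKne
  refine ⟨‖v₀‖⁻¹ • v₀, ?_, ?_⟩
  · rw [norm_smul]
    simp [norm_ne_zero_iff.mpr hv₀]
  · rw [real_inner_smul_right]
    have : (inner ℝ ξ v₀ : ℝ) = 0 :=
      (Submodule.mem_orthogonal _ v₀).mp hv₀K ξ (Submodule.mem_span_singleton_self ξ)
    rw [this, mul_zero]

end

open Metric Set

theorem stmt6 (N : ℕ) (hN : 2 ≤ N) (H : EuclideanSpace ℝ (Fin N) → ℝ)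
    (hcont : Continuous H) (hnonneg : ∀ ξ, 0 ≤ H ξ)
    (hhom : ∀ l : ℝ, 0 < l → ∀ ξ, H (l • ξ) = l * H ξ)
    (hconv : ConvexOn ℝ Set.univ H)
    (hpos : ∀ ξ ∈ sphere (0 : EuclideanSpace ℝ (Fin N)) 1, 0 < H ξ)
    (hC2 : ContDiffOn ℝ 2 H ({0}ᶜ : Set (EuclideanSpace ℝ (Fin N))))
    (lam : ℝ) (hlam : 0 < lam)
    (hhess_lb : ∀ ξ : EuclideanSpace ℝ (Fin N), ξ ≠ 0 → ∀ η,
      (1 / lam) * ‖ξ‖ ^ (N - 2) * ‖η‖ ^ 2 ≤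
        (iteratedFDeriv ℝ 2 (fun x => (H x) ^ N) ξ) ![η, η])
    (hhess_ub : ∀ ξ : EuclideanSpace ℝ (Fin N), ξ ≠ 0 →
      ∑ i : Fin N, ∑ j : Fin N,
        |(iteratedFDeriv ℝ 2 (fun x => (H x) ^ N) ξ)
          ![EuclideanSpace.single i (1:ℝ), EuclideanSpace.single j (1:ℝ)]| ≤
        lam * ‖ξ‖ ^ (N - 2))
    (a : EuclideanSpace ℝ (Fin N) → EuclideanSpace ℝ (Fin N))
    (ha : ∀ ξ, a ξ = (H ξ) ^ (N - 1) • gradient H ξ) :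
    ∃ c₁ c₂ : ℝ, 0 < c₁ ∧ 0 < c₂ ∧
      ∀ ξ₁ ξ₂ : EuclideanSpace ℝ (Fin N), ξ₁ ≠ 0 → ξ₂ ≠ 0 →
        c₁ * (‖ξ₁‖ + ‖ξ₂‖) ^ (N - 2) * ‖ξ₁ - ξ₂‖ ^ 2 ≤
            (inner ℝ (a ξ₁ - a ξ₂) (ξ₁ - ξ₂) : ℝ) ∧
        ‖a ξ₁ - a ξ₂‖ ≤ c₂ * (‖ξ₁‖ + ‖ξ₂‖) ^ (N - 2) * ‖ξ₁ - ξ₂‖ := by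
  have hNpos : (0:ℝ) < N := by
    have : (0:ℕ) < N := by omega
    exact_mod_cast this
  refine ⟨1/((N:ℝ)*lam*4^(N-1)), lam, by positivity, hlam, ?_⟩
  intro ξ₁ ξ₂ hξ₁ hξ₂
  by_cases hseg : ∀ t ∈ Icc (0:ℝ) 1, ξ₂ + t • (ξ₁ - ξ₂) ≠ 0
  · exact aux_nondeg hN H hC2 lam hlam hhess_lb hhess_ub a ha ξ₁ ξ₂ hseg
  · push_neg at hseg
    obtain ⟨t₀, ht₀mem, ht₀⟩ := hseg
    have ht₀0 : t₀ ≠ 0 := by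
      rintro rfl
      simp only [zero_smul, add_zero] at ht₀
      exact hξ₂ ht₀
    have hpar : ξ₁ = (t₀⁻¹ * (t₀ - 1)) • ξ₂ := by
      have h3 : t₀ • ξ₁ = (t₀ - 1) • ξ₂ := by
        have h4 : ξ₂ + t₀ • (ξ₁ - ξ₂) = t₀ • ξ₁ - (t₀ - 1) • ξ₂ := by module
        rw [h4] at ht₀
        exact sub_eq_zero.mp ht₀
      calc ξ₁ = t₀⁻¹ • (t₀ • ξ₁) := by
            rw [smul_smul, inv_mul_cancel₀ ht₀0, one_smul]
        _ = (t₀⁻¹ * (t₀ - 1)) • ξ₂ := by rw [h3, smul_smul]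
    obtain ⟨v, hv1, hv2⟩ := aux_perp hN ξ₂ hξ₂
    have hv2' : (inner ℝ ξ₁ v : ℝ) = 0 := by
      rw [hpar, real_inner_smul_left, hv2, mul_zero]
    have hvv : (inner ℝ v v : ℝ) = 1 := by
      rw [real_inner_self_eq_norm_mul_norm, hv1, mul_one]
    have main : ∀ ε ∈ Ioi (0:ℝ),
        (1/((N:ℝ)*lam*4^(N-1))) * (‖ξ₁‖ + ‖ξ₂ + ε • v‖) ^ (N - 2)
            * ‖ξ₁ - (ξ₂ + ε • v)‖ ^ 2 ≤
          (inner ℝ (a ξ₁ - a (ξ₂ + ε • v)) (ξ₁ - (ξ₂ + ε • v)) : ℝ) ∧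
        ‖a ξ₁ - a (ξ₂ + ε • v)‖ ≤
          lam * (‖ξ₁‖ + ‖ξ₂ + ε • v‖) ^ (N - 2) * ‖ξ₁ - (ξ₂ + ε • v)‖ := by
      intro ε hε
      have hεpos : (0:ℝ) < ε := hε
      have hsegε : ∀ t ∈ Icc (0:ℝ) 1,
          (ξ₂ + ε • v) + t • (ξ₁ - (ξ₂ + ε • v)) ≠ 0 := by
        intro t ht hzero
        have hinner := congrArg (fun w : EuclideanSpace ℝ (Fin N) => (inner ℝ w v : ℝ)) hzero
        simp only [inner_add_left, inner_sub_left, real_inner_smul_left,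
          inner_zero_left, hv2, hv2', hvv, mul_one, mul_zero] at hinner
        have ht1 : t = 1 := by
          have h5 : ε * (1 - t) = 0 := by linarith
          rcases mul_eq_zero.mp h5 with h | h
          · exact absurd h (ne_of_gt hεpos)
          · linarith
        rw [ht1, one_smul] at hzero
        have : ξ₁ = 0 := by
          have h6 : (ξ₂ + ε • v) + (ξ₁ - (ξ₂ + ε • v)) = ξ₁ := by module
          rw [h6] at hzero
          exact hzero
        exact hξ₁ this
      exact aux_nondeg hN H hC2 lam hlam hhess_lb hhess_ub a ha ξ₁ (ξ₂ + ε • v) hsegε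
    -- limit as ε → 0⁺
    have hT : Filter.Tendsto (fun ε : ℝ => ξ₂ + ε • v) (nhdsWithin 0 (Ioi 0)) (nhds ξ₂) := by
      have hc : Continuous (fun ε : ℝ => ξ₂ + ε • v) := by fun_prop
      have h7 : Filter.Tendsto (fun ε : ℝ => ξ₂ + ε • v) (nhds 0) (nhds (ξ₂ + (0:ℝ) • v)) :=
        hc.tendsto 0
      rw [zero_smul, add_zero] at h7
      exact h7.mono_left nhdsWithin_le_nhds
    have hfd : ContinuousOn (fderiv ℝ H) ({0}ᶜ : Set (EuclideanSpace ℝ (Fin N))) :=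
      hC2.continuousOn_fderiv_of_isOpen isOpen_compl_singleton (by norm_num)
    have hfdAt : ContinuousAt (fderiv ℝ H) ξ₂ :=
      hfd.continuousAt (isOpen_compl_singleton.mem_nhds hξ₂)
    have hgradAt : ContinuousAt (gradient H) ξ₂ := by
      have heq : gradient H = fun x =>
          (InnerProductSpace.toDual ℝ (EuclideanSpace ℝ (Fin N))).symm (fderiv ℝ H x) := rfl
      rw [heq]
      exact ((InnerProductSpace.toDual ℝ (EuclideanSpace ℝ (Fin N))).symm.continuous.continuousAt).comp hfdAt
    have hacont : ContinuousAt a ξ₂ := by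
      have haf : a = fun ξ => (H ξ)^(N-1) • gradient H ξ := funext ha
      rw [haf]
      exact ((hcont.continuousAt).pow _).smul hgradAt
    have haT : Filter.Tendsto (fun ε : ℝ => a (ξ₂ + ε • v)) (nhdsWithin 0 (Ioi 0))
        (nhds (a ξ₂)) := hacont.tendsto.comp hT
    constructor
    · apply le_of_tendsto_of_tendsto
        (f := fun ε : ℝ => (1/((N:ℝ)*lam*4^(N-1))) * (‖ξ₁‖ + ‖ξ₂ + ε • v‖) ^ (N - 2)
            * ‖ξ₁ - (ξ₂ + ε • v)‖ ^ 2)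
        (g := fun ε : ℝ => (inner ℝ (a ξ₁ - a (ξ₂ + ε • v)) (ξ₁ - (ξ₂ + ε • v)) : ℝ))
        (b := nhdsWithin 0 (Ioi 0))
      · exact ((tendsto_const_nhds.mul ((tendsto_const_nhds.add hT.norm).pow (N-2)))).mul
          ((tendsto_const_nhds.sub hT).norm.pow 2)
      · exact (tendsto_const_nhds.sub haT).inner (tendsto_const_nhds.sub hT)
      · exact eventually_nhdsWithin_of_forall (fun ε hε => (main ε hε).1)
    · apply le_of_tendsto_of_tendsto
        (f := fun ε : ℝ => ‖a ξ₁ - a (ξ₂ + ε • v)‖)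
        (g := fun ε : ℝ => lam * (‖ξ₁‖ + ‖ξ₂ + ε • v‖) ^ (N - 2) * ‖ξ₁ - (ξ₂ + ε • v)‖)
        (b := nhdsWithin 0 (Ioi 0))
      · exact (tendsto_const_nhds.sub haT).norm
      · exact ((tendsto_const_nhds.mul ((tendsto_const_nhds.add hT.norm).pow (N-2)))).mul
          (tendsto_const_nhds.sub hT).norm
      · exact eventually_nhdsWithin_of_forall (fun ε hε => (main ε hε).2)
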